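/- Let m ≥ 1 be an integer, M a nonempty set, and G_α : M → M for α ∈ {1,…,m}. The following six statements are equivalent: (i) every G_α is bijective and G_α ∘ G_β = G_β ∘ G_α for all α, β; (ii) there exists t₀ ∈ ℤ^m such that for every α₀ ∈ {1,…,m} and every x₀ ∈ M there is a unique function x : {t ≥ t₀ − 1_{α₀}} → M with x(t + 1_α) = G_α(x(t)) for all t ≥ t₀ − 1_{α₀} and all α, and x(t₀) = x₀; (iii) there exist t₀, t₁ ∈ ℤ^m with t₁^α < t₀^α for all α such that for every x₀ ∈ M there is a unique function x : {t ≥ t₁} → M with x(t + 1_α) = G_α(x(t)) for all t ≥ t₁ and all α, and x(t₀) = x₀; (iv) for all t₀, t₁ ∈ ℤ^m with t₁ ≤ t₀ and every x₀ ∈ M there is a unique function x : {t ≥ t₁} → M with x(t + 1_α) = G_α(x(t)) for all t ≥ t₁ and all α, and x(t₀) = x₀; (v) there exists t₀ ∈ ℤ^m such that for every x₀ ∈ M there is a unique function x : ℤ^m → M with x(t + 1_α) = G_α(x(t)) for all t ∈ ℤ^m and all α, and x(t₀) = x₀; (vi) for every (t₀, x₀) ∈ ℤ^m × M there is a unique function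 x : ℤ^m → M with x(t + 1_α) = G_α(x(t)) for all t ∈ ℤ^m and all α, and x(t₀) = x₀. -/

import Mathlib

/-- `1_α ∈ ℤ^m` is nonnegative, so `t₁ ≤ t` implies `t₁ ≤ t + 1_α`
(componentwise order on `ℤ^m`). -/
theorem le_stepv {m : ℕ} {t₁ t : Fin m → ℤ} (h : t₁ ≤ t) (α : Fin m) :
    t₁ ≤ t + Pi.single α 1 :=
  le_trans h (le_add_of_nonneg_right (by
    intro β
    by_cases hb : β = α <;> simp [Pi.single_apply, hb]))

/-- The shift `t ↦ t + 1_α` on `{t ∈ ℤ^m | t ≥ t₁}`. -/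
def stepv {m : ℕ} {t₁ : Fin m → ℤ} (t : {t : Fin m → ℤ // t₁ ≤ t}) (α : Fin m) :
    {t : Fin m → ℤ // t₁ ≤ t} :=
  ⟨t.1 + Pi.single α 1, le_stepv t.2 α⟩

theorem sub_single_le {m : ℕ} (t₀ : Fin m → ℤ) (α : Fin m) :
    t₀ - Pi.single α 1 ≤ t₀ :=
  sub_le_self _ (by
    intro β
    by_cases hb : β = α <;> simp [Pi.single_apply, hb])

/-- `G₁^{(k 1)} ∘ G₂^{(k 2)} ∘ ⋯ ∘ G_m^{(k m)}`. -/
def iterAll {m : ℕ} {M : Type*} (G : Fin m → M → M) (k : Fin m → ℕ) : M → M :=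
  (List.finRange m).foldr (fun α f => (G α)^[k α] ∘ f) id

lemma single_nonneg' {m : ℕ} (α : Fin m) (c : ℤ) (hc : 0 ≤ c) :
    (0 : Fin m → ℤ) ≤ Pi.single α c := by
  intro β; by_cases hb : β = α <;> simp [Pi.single_apply, hb, hc]

/-- A function on the quadrant invariant under all shifts is constant. -/
lemma quad_const {m : ℕ} {M : Type*} {t₁ : Fin m → ℤ}
    (f : {t : Fin m → ℤ // t₁ ≤ t} → M)
    (hf : ∀ t α, f (stepv t α) = f t) :
    ∀ t s, f t = f s := by
  have hn : ∀ (t s : {t : Fin m → ℤ // t₁ ≤ t}) (α : Fin m) (n : ℕ),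
      s.1 = t.1 + Pi.single α (n : ℤ) → f s = f t := by
    intro t s α n
    induction n generalizing s with
    | zero =>
      intro hs
      have : s = t := Subtype.ext (by simpa using hs)
      rw [this]
    | succ n ih =>
      intro hs
      have hu : t₁ ≤ t.1 + Pi.single α (n : ℤ) :=
        le_trans t.2 (le_add_of_nonneg_right (single_nonneg' α _ (by positivity)))
      have hse : s = stepv ⟨t.1 + Pi.single α (n : ℤ), hu⟩ α := by
        apply Subtype.ext
        show s.1 = t.1 + Pi.single α (n : ℤ) + Pi.single α 1
        rw [hs]
        rw [add_assoc, ← Pi.single_add]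
        push_cast
        ring_nf
      rw [hse, hf]
      exact ih _ rfl
  have hF : ∀ (F : Finset (Fin m)) (t s : {t : Fin m → ℤ // t₁ ≤ t}) (k : Fin m → ℕ),
      s.1 = t.1 + ∑ β ∈ F, Pi.single β ((k β : ℤ)) → f s = f t := by
    intro F
    induction F using Finset.induction with
    | empty => intro t s k hs; have : s = t := Subtype.ext (by simpa using hs); rw [this]
    | @insert a F ha ih =>
      intro t s k hs
      have hu : t₁ ≤ t.1 + ∑ β ∈ F, Pi.single β ((k β : ℤ)) :=
        le_trans t.2 (le_add_of_nonneg_right (Finset.sum_nonneg fun β _ =>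
          single_nonneg' β _ (by positivity)))
      have h1 : f s = f ⟨t.1 + ∑ β ∈ F, Pi.single β ((k β : ℤ)), hu⟩ := by
        apply hn _ _ a (k a)
        rw [hs, Finset.sum_insert ha]
        ring
      rw [h1]
      exact ih t _ k rfl
  intro t s
  have key : ∀ (t : {t : Fin m → ℤ // t₁ ≤ t}) (u : Fin m → ℤ) (hu : t₁ ≤ u),
      t.1 ≤ u → f ⟨u, hu⟩ = f t := by
    intro t u hu htu
    apply hF Finset.univ t ⟨u, hu⟩ (fun β => (u β - t.1 β).toNat)
    show u = t.1 + _
    rw [Finset.univ_sum_single]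
    funext β
    simp only [Pi.add_apply]
    rw [Int.toNat_of_nonneg (sub_nonneg.mpr (htu β))]
    ring
  have h1 := key t (t.1 ⊔ s.1) (le_trans t.2 le_sup_left) le_sup_left
  have h2 := key s (t.1 ⊔ s.1) (le_trans t.2 le_sup_left) le_sup_right
  rw [← h1, h2]

/-- Core: given (i), global solutions exist and quadrant solutions are unique. -/
lemma core {m : ℕ} {M : Type*} (G : Fin m → M → M)
    (hbij : ∀ α, Function.Bijective (G α))
    (hcomm : ∀ α β, G α ∘ G β = G β ∘ G α) :
    ∃ X : (Fin m → ℤ) → M → (Fin m → ℤ) → M,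
      (∀ t₀ x₀ t α, X t₀ x₀ (t + Pi.single α 1) = G α (X t₀ x₀ t)) ∧
      (∀ t₀ x₀, X t₀ x₀ t₀ = x₀) ∧
      (∀ (t₁ t₀ : Fin m → ℤ) (h : t₁ ≤ t₀) (x₀ : M)
         (x : {t : Fin m → ℤ // t₁ ≤ t} → M),
         (∀ t α, x (stepv t α) = G α (x t)) → x ⟨t₀, h⟩ = x₀ →
         ∀ t, x t = X t₀ x₀ t.1) := by
  classical
  set e : Fin m → Equiv.Perm M := fun α => Equiv.ofBijective (G α) (hbij α) with he
  have heap : ∀ α y, e α y = G α y := fun α y => rfl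
  have hcom : ∀ α β, Commute (e α) (e β) := by
    intro α β
    apply Equiv.ext
    intro y
    have := congrFun (hcomm α β) y
    simpa [Equiv.Perm.mul_apply, heap] using this
  set P : (Fin m → Multiplicative ℤ) →* Equiv.Perm M :=
    MonoidHom.noncommPiCoprod (fun α => zpowersHom (Equiv.Perm M) (e α))
      (fun α β _ x y => by
        exact (hcom α β).zpow_zpow _ _) with hP
  set Q : (Fin m → ℤ) → Equiv.Perm M :=
    fun s => P (fun α => Multiplicative.ofAdd (s α)) with hQ
  have hQadd : ∀ s s', Q (s + s') = Q s * Q s' := by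
    intro s s'
    rw [hQ]
    dsimp only
    rw [← map_mul]
    rfl
  have hQsingle : ∀ α, Q (Pi.single α 1) = e α := by
    intro α
    have h1 : ((fun β => Multiplicative.ofAdd ((Pi.single α 1 : Fin m → ℤ) β)) : Fin m → Multiplicative ℤ) =
        (Pi.mulSingle α (Multiplicative.ofAdd (1:ℤ)) : Fin m → Multiplicative ℤ) := by
      funext β
      by_cases hb : β = α <;> simp [Pi.single_apply, Pi.mulSingle_apply, hb]
    rw [hQ]
    dsimp only
    rw [h1, hP]
    erw [MonoidHom.noncommPiCoprod_mulSingle]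
    rw [zpowersHom_apply]
    simp
  have hQzero : Q 0 = 1 := by
    have h := hQadd 0 0
    simp only [add_zero] at h
    exact (mul_eq_left.mp h.symm)
  refine ⟨fun t₀ x₀ t => Q (t - t₀) x₀, ?_, ?_, ?_⟩
  · intro t₀ x₀ t α
    show Q (t + Pi.single α 1 - t₀) x₀ = G α (Q (t - t₀) x₀)
    have h1 : t + Pi.single α 1 - t₀ = Pi.single α 1 + (t - t₀) := by ring
    rw [h1, hQadd, hQsingle, Equiv.Perm.mul_apply, heap]
  · intro t₀ x₀
    show Q (t₀ - t₀) x₀ = x₀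
    rw [sub_self, hQzero, Equiv.Perm.one_apply]
  · intro t₁ t₀ h x₀ x hx hx0
    set y : {t : Fin m → ℤ // t₁ ≤ t} → M := fun t => (Q (t.1 - t₀))⁻¹ (x t) with hy
    have hyc : ∀ t α, y (stepv t α) = y t := by
      intro t α
      rw [hy]
      dsimp only
      have h1 : (stepv t α).1 - t₀ = Pi.single α 1 + (t.1 - t₀) := by
        show t.1 + Pi.single α 1 - t₀ = _
        ring
      rw [h1, hQadd, hQsingle, hx, mul_inv_rev, Equiv.Perm.mul_apply, ← heap,
        Equiv.Perm.coe_inv, Equiv.Perm.coe_inv, Equiv.symm_apply_apply]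
    intro t
    have h1 : y t = y ⟨t₀, h⟩ := quad_const y hyc t ⟨t₀, h⟩
    rw [hy] at h1
    dsimp only at h1
    rw [hx0, sub_self, hQzero, inv_one, Equiv.Perm.one_apply] at h1
    have := congrArg (Q (t.1 - t₀)) h1
    rwa [Equiv.Perm.coe_inv, Equiv.apply_symm_apply] at this

lemma quad_facts {m : ℕ} {M : Type*} (G : Fin m → M → M) (t₀ t₁ : Fin m → ℤ)
    (h : t₁ ≤ t₀)
    (H : ∀ x₀ : M, ∃! x : {t : Fin m → ℤ // t₁ ≤ t} → M,
      (∀ (t : {t : Fin m → ℤ // t₁ ≤ t}) (α : Fin m),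
        x (stepv t α) = G α (x t)) ∧ x ⟨t₀, h⟩ = x₀) :
    (∀ α β, G α ∘ G β = G β ∘ G α) ∧
      (∀ α, t₁ α + 1 ≤ t₀ α → Function.Bijective (G α)) := by
  have hswap : ∀ (t : {t : Fin m → ℤ // t₁ ≤ t}) (α β : Fin m),
      stepv (stepv t α) β = stepv (stepv t β) α := by
    intro t α β
    apply Subtype.ext
    show t.1 + Pi.single α 1 + Pi.single β 1 = t.1 + Pi.single β 1 + Pi.single α 1
    ring
  constructor
  · intro α β
    funext x₀
    obtain ⟨x, ⟨hx, hx0⟩, _⟩ := H x₀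
    have h1 : x (stepv (stepv ⟨t₀, h⟩ β) α) = G α (G β x₀) := by
      rw [hx, hx, hx0]
    have h2 : x (stepv (stepv ⟨t₀, h⟩ α) β) = G β (G α x₀) := by
      rw [hx, hx, hx0]
    have := hswap (⟨t₀, h⟩ : {t : Fin m → ℤ // t₁ ≤ t}) β α
    rw [this, h2] at h1
    exact h1.symm
  · intro α hα
    have hp : t₁ ≤ t₀ - Pi.single α 1 := by
      intro β
      by_cases hb : β = α
      · subst hb
        simp only [Pi.sub_apply, Pi.single_apply, if_pos rfl]
        omega
      · simp only [Pi.sub_apply, Pi.single_apply, if_neg hb, sub_zero]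
        exact h β
    set p : {t : Fin m → ℤ // t₁ ≤ t} := ⟨t₀ - Pi.single α 1, hp⟩ with hpd
    have hstep : stepv p α = ⟨t₀, h⟩ := by
      apply Subtype.ext
      show t₀ - Pi.single α 1 + Pi.single α 1 = t₀
      ring
    constructor
    · -- injective
      intro a b hab
      obtain ⟨x, ⟨hx, hx0⟩, _⟩ := H a
      obtain ⟨y, ⟨hy, hy0⟩, _⟩ := H b
      obtain ⟨u, hu, huniq⟩ := H (G α a)
      have hwx : (∀ (t : {t : Fin m → ℤ // t₁ ≤ t}) (β : Fin m),
          (fun t => x (stepv t α)) (stepv t β) = G β ((fun t => x (stepv t α)) t)) ∧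
          (fun t => x (stepv t α)) ⟨t₀, h⟩ = G α a := by
        refine ⟨fun t β => ?_, ?_⟩
        · show x (stepv (stepv t β) α) = G β (x (stepv t α))
          rw [hswap, hx]
        · show x (stepv ⟨t₀, h⟩ α) = G α a
          rw [hx, hx0]
      have hwy : (∀ (t : {t : Fin m → ℤ // t₁ ≤ t}) (β : Fin m),
          (fun t => y (stepv t α)) (stepv t β) = G β ((fun t => y (stepv t α)) t)) ∧
          (fun t => y (stepv t α)) ⟨t₀, h⟩ = G α a := by
        refine ⟨fun t β => ?_, ?_⟩
        · show y (stepv (stepv t β) α) = G β (y (stepv t α))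
          rw [hswap, hy]
        · show y (stepv ⟨t₀, h⟩ α) = G α a
          rw [hy, hy0, hab]
      have hxy : (fun t => x (stepv t α)) = (fun t => y (stepv t α)) := by
        exact (huniq (fun t => x (stepv t α)) hwx).trans
          (huniq (fun t => y (stepv t α)) hwy).symm
      have := congrFun hxy p
      rw [hstep, hx0, hy0] at this
      exact this
    · -- surjective
      intro b
      obtain ⟨x, ⟨hx, hx0⟩, _⟩ := H b
      refine ⟨x p, ?_⟩
      rw [← hx, hstep, hx0]

lemma glob_facts {m : ℕ} {M : Type*} (G : Fin m → M → M) (t₀ : Fin m → ℤ)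
    (H : ∀ x₀ : M, ∃! x : (Fin m → ℤ) → M,
      (∀ (t : Fin m → ℤ) (α : Fin m), x (t + Pi.single α 1) = G α (x t)) ∧
        x t₀ = x₀) :
    (∀ α, Function.Bijective (G α)) ∧ (∀ α β, G α ∘ G β = G β ∘ G α) := by
  have hsub : ∀ (α : Fin m), t₀ - (Pi.single α 1 : Fin m → ℤ) + Pi.single α 1 = t₀ := by
    intro α; ring
  constructor
  · intro α
    constructor
    · -- injective
      intro a b hab
      obtain ⟨x, ⟨hx, hx0⟩, _⟩ := H a
      obtain ⟨y, ⟨hy, hy0⟩, _⟩ := H b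
      obtain ⟨u, hu, huniq⟩ := H (G α a)
      have hwx : (∀ (t : Fin m → ℤ) (β : Fin m),
          (fun t => x (t + Pi.single α 1)) (t + Pi.single β 1)
            = G β ((fun t => x (t + Pi.single α 1)) t)) ∧
          (fun t => x (t + Pi.single α 1)) t₀ = G α a := by
        refine ⟨fun t β => ?_, ?_⟩
        · show x (t + Pi.single β 1 + Pi.single α 1) = G β (x (t + Pi.single α 1))
          rw [add_right_comm, hx]
        · show x (t₀ + Pi.single α 1) = G α a
          rw [hx, hx0]
      have hwy : (∀ (t : Fin m → ℤ) (β : Fin m),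
          (fun t => y (t + Pi.single α 1)) (t + Pi.single β 1)
            = G β ((fun t => y (t + Pi.single α 1)) t)) ∧
          (fun t => y (t + Pi.single α 1)) t₀ = G α a := by
        refine ⟨fun t β => ?_, ?_⟩
        · show y (t + Pi.single β 1 + Pi.single α 1) = G β (y (t + Pi.single α 1))
          rw [add_right_comm, hy]
        · show y (t₀ + Pi.single α 1) = G α a
          rw [hy, hy0, hab]
      have hxy : (fun t : Fin m → ℤ => x (t + Pi.single α 1))
          = (fun t : Fin m → ℤ => y (t + Pi.single α 1)) := by
        exact (huniq (fun t : Fin m → ℤ => x (t + Pi.single α 1)) hwx).trans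
          (huniq (fun t : Fin m → ℤ => y (t + Pi.single α 1)) hwy).symm
      have := congrFun hxy (t₀ - Pi.single α 1)
      rw [hsub α, hx0, hy0] at this
      exact this
    · -- surjective
      intro b
      obtain ⟨x, ⟨hx, hx0⟩, _⟩ := H b
      refine ⟨x (t₀ - Pi.single α 1), ?_⟩
      rw [← hx, hsub α, hx0]
  · intro α β
    funext x₀
    obtain ⟨x, ⟨hx, hx0⟩, _⟩ := H x₀
    have h1 : x (t₀ + Pi.single β 1 + Pi.single α 1) = G α (G β x₀) := by
      rw [hx, hx, hx0]
    have h2 : x (t₀ + Pi.single α 1 + Pi.single β 1) = G β (G α x₀) := by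
      rw [hx, hx, hx0]
    rw [add_right_comm, h2] at h1
    exact h1.symm

/-- Theorem 3. For maps `G_α : M → M`, the six statements about the
autonomous recurrence `x(t+1_α) = G_α(x(t))` are equivalent. -/
theorem stmt_9 {m : ℕ} (hm : 1 ≤ m) {M : Type*} [Nonempty M]
    (G : Fin m → M → M) :
    List.TFAE
      [ -- (i) each `G_α` is bijective and they pairwise commute
        (∀ α : Fin m, Function.Bijective (G α)) ∧
          (∀ α β : Fin m, G α ∘ G β = G β ∘ G α),
        -- (ii)
        ∃ t₀ : Fin m → ℤ, ∀ (α₀ : Fin m) (x₀ : M),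
          ∃! x : {t : Fin m → ℤ // t₀ - Pi.single α₀ 1 ≤ t} → M,
            (∀ (t : {t : Fin m → ℤ // t₀ - Pi.single α₀ 1 ≤ t}) (α : Fin m),
              x (stepv t α) = G α (x t)) ∧
            x ⟨t₀, sub_single_le t₀ α₀⟩ = x₀,
        -- (iii)
        ∃ (t₀ t₁ : Fin m → ℤ) (hlt : ∀ α : Fin m, t₁ α < t₀ α), ∀ x₀ : M,
          ∃! x : {t : Fin m → ℤ // t₁ ≤ t} → M,
            (∀ (t : {t : Fin m → ℤ // t₁ ≤ t}) (α : Fin m),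
              x (stepv t α) = G α (x t)) ∧
            x ⟨t₀, fun α => (hlt α).le⟩ = x₀,
        -- (iv)
        ∀ (t₀ t₁ : Fin m → ℤ) (h : t₁ ≤ t₀) (x₀ : M),
          ∃! x : {t : Fin m → ℤ // t₁ ≤ t} → M,
            (∀ (t : {t : Fin m → ℤ // t₁ ≤ t}) (α : Fin m),
              x (stepv t α) = G α (x t)) ∧
            x ⟨t₀, h⟩ = x₀,
        -- (v)
        ∃ t₀ : Fin m → ℤ, ∀ x₀ : M,
          ∃! x : (Fin m → ℤ) → M,
            (∀ (t : Fin m → ℤ) (α : Fin m), x (t + Pi.single α 1) = G α (x t)) ∧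
            x t₀ = x₀,
        -- (vi)
        ∀ (t₀ : Fin m → ℤ) (x₀ : M),
          ∃! x : (Fin m → ℤ) → M,
            (∀ (t : Fin m → ℤ) (α : Fin m), x (t + Pi.single α 1) = G α (x t)) ∧
            x t₀ = x₀ ] := by
  tfae_have 1 → 4 := by
    rintro ⟨hbij, hcomm⟩ t₀ t₁ h x₀
    obtain ⟨X, hXstep, hX0, hXuniq⟩ := core G hbij hcomm
    refine ⟨fun t => X t₀ x₀ t.1, ⟨fun t α => hXstep t₀ x₀ t.1 α, hX0 t₀ x₀⟩, ?_⟩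
    rintro y ⟨hy, hy0⟩
    funext t
    exact hXuniq t₁ t₀ h x₀ y hy hy0 t
  tfae_have 4 → 3 := by
    intro h4
    exact ⟨0, fun _ => -1, fun α => by norm_num,
      fun x₀ => h4 0 (fun _ => -1) (fun β => by norm_num) x₀⟩
  tfae_have 3 → 1 := by
    rintro ⟨t₀, t₁, hlt, H⟩
    obtain ⟨hc, hb⟩ := quad_facts G t₀ t₁ (fun α => (hlt α).le) H
    exact ⟨fun α => hb α (Int.add_one_le_iff.mpr (hlt α)), hc⟩
  tfae_have 1 → 2 := by
    rintro ⟨hbij, hcomm⟩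
    obtain ⟨X, hXstep, hX0, hXuniq⟩ := core G hbij hcomm
    refine ⟨0, fun α₀ x₀ => ?_⟩
    refine ⟨fun t => X 0 x₀ t.1, ⟨fun t α => hXstep 0 x₀ t.1 α, hX0 0 x₀⟩, ?_⟩
    rintro y ⟨hy, hy0⟩
    funext t
    exact hXuniq (0 - Pi.single α₀ 1) 0 (sub_single_le 0 α₀) x₀ y hy hy0 t
  tfae_have 2 → 1 := by
    rintro ⟨t₀, H⟩
    constructor
    · intro α
      refine (quad_facts G t₀ (t₀ - Pi.single α 1) (sub_single_le t₀ α) (H α)).2 α ?_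
      have h1 : (t₀ - Pi.single α 1 : Fin m → ℤ) α = t₀ α - 1 := by simp
      omega
    · exact (quad_facts G t₀ (t₀ - Pi.single ⟨0, hm⟩ 1) (sub_single_le t₀ ⟨0, hm⟩)
        (H ⟨0, hm⟩)).1
  tfae_have 1 → 6 := by
    rintro ⟨hbij, hcomm⟩ t₀ x₀
    obtain ⟨X, hXstep, hX0, hXuniq⟩ := core G hbij hcomm
    refine ⟨X t₀ x₀, ⟨hXstep t₀ x₀, hX0 t₀ x₀⟩, ?_⟩
    rintro y ⟨hy, hy0⟩
    funext t
    exact hXuniq (t ⊓ t₀) t₀ inf_le_right x₀ (fun s => y s.1)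
      (fun s α => hy s.1 α) hy0 ⟨t, inf_le_left⟩
  tfae_have 6 → 5 := fun h6 => ⟨0, h6 0⟩
  tfae_have 5 → 1 := by
    rintro ⟨t₀, H⟩
    exact glob_facts G t₀ H
  tfae_finish
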